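/- Let q ≥ 2 and let f : ℕ → ℝ be a q-regular function with a zero-insensitive minimal linear representation (uᵀ, (M_i)_{0 ≤ i < q}, v) of dimension d, i.e., f(n) = uᵀ M_{n₀} M_{n₁} ⋯ M_{n_L} v where n_L ⋯ n₁ n₀ is the q-ary expansion of n (and f(0) = uᵀ v), with M₀ v = v, and no linear representation of f has dimension smaller than d. Then for a nonnegative integer r, the following are equivalent: (i) f is q-quasimultiplicative with parameter r; (ii) M₀^r = v uᵀ. -/

import Mathlib

open Matrix

/-- `f` is `q`-quasimultiplicative with parameter `r`. -/
def QuasiMultiplicative (q r : ℕ) (f : ℕ → ℝ) : Prop :=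
  ∀ a b k : ℕ, b < q ^ k → f (q ^ (k + r) * a + b) = f a * f b

/-- `(uᵀ, (M_i), v)` is a linear representation of dimension `d` of `f` in base `q`:
`f(n) = uᵀ M_{n₀} M_{n₁} ⋯ M_{n_L} v` where `n_L ⋯ n₁ n₀` is the `q`-ary expansion of `n`
(and `f(0) = uᵀ v`, corresponding to the empty expansion). -/
def IsLinearRepresentation (q d : ℕ) (f : ℕ → ℝ) (u : Fin d → ℝ)
    (M : ℕ → Matrix (Fin d) (Fin d) ℝ) (v : Fin d → ℝ) : Prop :=
  ∀ n : ℕ, f n = u ⬝ᵥ (((Nat.digits q n).map M).prod *ᵥ v)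

/-- length of digits is at most `k` when `b < q ^ k`. -/
lemma aux_digits_len_le {q b k : ℕ} (hq : 2 ≤ q) (h : b < q ^ k) :
    (Nat.digits q b).length ≤ k := by
  by_contra hlt
  push_neg at hlt
  rcases Nat.eq_zero_or_pos b with rfl | hb
  · simp at hlt
  have h1 : q ^ (Nat.digits q b).length ≤ q * b :=
    Nat.base_pow_length_digits_le q b (by omega) (by omega)
  have h2 : q ^ (k + 1) ≤ q ^ (Nat.digits q b).length :=
    Nat.pow_le_pow_right (by omega) (by omega)
  rw [pow_succ] at h2
  have h3 : q ^ k * q ≤ q * b := le_trans h2 h1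
  rw [mul_comm q b] at h3
  have h4 : q ^ k ≤ b := Nat.le_of_mul_le_mul_right h3 (by omega)
  omega

lemma aux_vecMulVec_mulVec {d : ℕ} (v u x : Fin d → ℝ) :
    vecMulVec v u *ᵥ x = (u ⬝ᵥ x) • v := by
  ext i
  simp only [vecMulVec, mulVec, dotProduct, of_apply, Pi.smul_apply, smul_eq_mul,
    Finset.sum_mul]
  exact Finset.sum_congr rfl fun j _ => by ring

lemma aux_transpose_dot {d : ℕ} (A : Matrix (Fin d) (Fin d) ℝ) (x z : Fin d → ℝ) :
    (Aᵀ *ᵥ x) ⬝ᵥ z = x ⬝ᵥ (A *ᵥ z) := by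
  rw [Matrix.mulVec_transpose, ← Matrix.dotProduct_mulVec]

/-- Characterisation of `q`-quasimultiplicativity of a `q`-regular function: if `f` has a
zero-insensitive (`M₀ v = v`) minimal linear representation `(uᵀ, (M_i), v)`, then `f` is
`q`-quasimultiplicative with parameter `r` if and only if `M₀^r = v uᵀ`. -/
theorem qRegular_quasiMultiplicative_iff (q d r : ℕ) (hq : 2 ≤ q) (f : ℕ → ℝ)
    (u v : Fin d → ℝ) (M : ℕ → Matrix (Fin d) (Fin d) ℝ)
    (hrep : IsLinearRepresentation q d f u M v)
    (hzero : M 0 *ᵥ v = v)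
    (hmin : ∀ (d' : ℕ) (u' : Fin d' → ℝ) (M' : ℕ → Matrix (Fin d') (Fin d') ℝ)
      (v' : Fin d' → ℝ), IsLinearRepresentation q d' f u' M' v' → d ≤ d') :
    QuasiMultiplicative q r f ↔ M 0 ^ r = Matrix.vecMulVec v u := by
  classical
  set W : ℕ → Matrix (Fin d) (Fin d) ℝ := fun n => ((Nat.digits q n).map M).prod with hWdef
  have hrepW : ∀ n, f n = u ⬝ᵥ (W n *ᵥ v) := fun n => hrep n
  have hW0 : W 0 = 1 := by simp [hWdef]
  have hpow : ∀ j, (M 0) ^ j *ᵥ v = v := by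
    intro j
    induction j with
    | zero => simp
    | succ j ih => rw [pow_succ, ← Matrix.mulVec_mulVec, hzero, ih]
  have hdig1 : ∀ i, 0 < i → i < q → Nat.digits q i = [i] := by
    intro i h1 h2
    rw [Nat.digits_def' (by omega : 1 < q) h1, Nat.mod_eq_of_lt h2, Nat.div_eq_of_lt h2]
    simp
  have hWi : ∀ i, 0 < i → i < q → W i = M i := by
    intro i h1 h2
    simp [hWdef, hdig1 i h1 h2]
  have hWkey : ∀ a b k, 0 < a → (Nat.digits q b).length ≤ k →
      W (q ^ k * a + b) = W b * (M 0) ^ (k - (Nat.digits q b).length) * W a := by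
    intro a b k ha hk
    have h := Nat.digits_append_zeroes_append_digits
      (b := q) (k := k - (Nat.digits q b).length) (m := a) (n := b) (by omega) ha
    rw [Nat.add_sub_cancel' hk] at h
    rw [show q ^ k * a + b = b + q ^ k * a by ring]
    simp only [hWdef]
    rw [← h]
    simp [List.map_append, List.prod_append, List.map_replicate, List.prod_replicate,
      mul_assoc]
  have hval : ∀ (P Q : Matrix (Fin d) (Fin d) ℝ) (j : ℕ),
      (P * (M 0) ^ j * Q) *ᵥ v = P *ᵥ ((M 0) ^ j *ᵥ (Q *ᵥ v)) := by
    intro P Q j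
    simp [Matrix.mulVec_mulVec, mul_assoc]
  constructor
  · -- hard direction
    intro hqm
    -- the reachability space V
    set V : Submodule ℝ (Fin d → ℝ) :=
      Submodule.span ℝ (Set.range fun a : ℕ => W a *ᵥ v) with hVdef
    have hvV : v ∈ V := Submodule.subset_span ⟨0, by simp [hW0]⟩
    have hVinv : ∀ i, i < q → ∀ x ∈ V, M i *ᵥ x ∈ V := by
      intro i hi x hx
      refine Submodule.span_induction (fun y hy => ?_) ?_ ?_ ?_ hx
      · rcases hy with ⟨a, rfl⟩
        rcases Nat.eq_zero_or_pos (q * a + i) with h0 | h0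
        · have ha : a = 0 := by nlinarith
          have hi0 : i = 0 := by omega
          subst ha; subst hi0
          simpa [hW0, hzero] using hvV
        · apply Submodule.subset_span
          refine ⟨q * a + i, ?_⟩
          have hd : Nat.digits q (q * a + i) = i :: Nat.digits q a := by
            rw [Nat.digits_def' (by omega : 1 < q) h0]
            congr 1
            · rw [Nat.mul_add_mod, Nat.mod_eq_of_lt hi]
            · rw [Nat.mul_add_div (by omega), Nat.div_eq_of_lt hi, add_zero]
          simp [hWdef, hd, List.prod_cons, Matrix.mulVec_mulVec]
      · rw [Matrix.mulVec_zero]; exact V.zero_mem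
      · intro x y _ _ hx' hy'
        rw [Matrix.mulVec_add]; exact V.add_mem hx' hy'
      · intro c x _ hx'
        rw [Matrix.mulVec_smul]; exact V.smul_mem c hx'
    -- smaller representation supported on V
    have hVtop : V = ⊤ := by
      set dV := Module.finrank ℝ V with hdVdef
      let bV : Module.Basis (Fin dV) ℝ V := Module.finBasis ℝ V
      let φ : ℕ → (V →ₗ[ℝ] V) := fun i =>
        if h : i < q then ((M i).mulVecLin).restrict (fun x hx => hVinv i h x hx) else 0
      have hφ : ∀ i, i < q → ∀ x : V, ((φ i x : Fin d → ℝ)) = M i *ᵥ (x : Fin d → ℝ) := by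
        intro i hi x
        simp [φ, dif_pos hi, LinearMap.restrict_apply]
        rfl
      let M' : ℕ → Matrix (Fin dV) (Fin dV) ℝ := fun i => LinearMap.toMatrix bV bV (φ i)
      let u' : Fin dV → ℝ := fun j => u ⬝ᵥ ((bV j : Fin d → ℝ))
      let v' : Fin dV → ℝ := ⇑(bV.repr ⟨v, hvV⟩)
      have hlist : ∀ l : List ℕ, (∀ i ∈ l, i < q) → ∀ x : V,
          ∃ y : V, ((y : Fin d → ℝ)) = (l.map M).prod *ᵥ (x : Fin d → ℝ) ∧
            (l.map M').prod *ᵥ ⇑(bV.repr x) = ⇑(bV.repr y) := by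
        intro l
        induction l with
        | nil => exact fun _ x => ⟨x, by simp, by simp⟩
        | cons i t ih =>
          intro hl x
          have hi : i < q := hl i List.mem_cons_self
          obtain ⟨y, hy1, hy2⟩ := ih (fun j hj => hl j (List.mem_cons_of_mem _ hj)) x
          refine ⟨φ i y, ?_, ?_⟩
          · rw [hφ i hi y, hy1, List.map_cons, List.prod_cons, Matrix.mulVec_mulVec]
          · rw [List.map_cons, List.prod_cons, ← Matrix.mulVec_mulVec, hy2]
            exact LinearMap.toMatrix_mulVec_repr bV bV (φ i) y
      have hudot : ∀ z : V, u ⬝ᵥ (z : Fin d → ℝ) = u' ⬝ᵥ ⇑(bV.repr z) := by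
        intro z
        let L : (Fin d → ℝ) →ₗ[ℝ] ℝ :=
          { toFun := fun x => u ⬝ᵥ x
            map_add' := fun a b => dotProduct_add u a b
            map_smul' := fun c a => by simp [dotProduct_smul] }
        have : u ⬝ᵥ (z : Fin d → ℝ) = L ((z : Fin d → ℝ)) := rfl
        rw [this]
        conv_lhs => rw [← bV.sum_repr z]
        simp only [AddSubmonoidClass.coe_finset_sum, map_sum, SetLike.val_smul,
          _root_.map_smul, smul_eq_mul, L, LinearMap.coe_mk, AddHom.coe_mk,
          dotProduct, u']
        exact Finset.sum_congr rfl fun j _ => by ring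
      have hrep' : IsLinearRepresentation q dV f u' M' v' := by
        intro n
        obtain ⟨y, hy1, hy2⟩ :=
          hlist (Nat.digits q n) (fun i hi => Nat.digits_lt_base (by omega) hi) ⟨v, hvV⟩
        show f n = u' ⬝ᵥ (((Nat.digits q n).map M').prod *ᵥ v')
        rw [hrep n]
        have : (((Nat.digits q n).map M').prod *ᵥ v') = ⇑(bV.repr y) := hy2
        rw [this, ← hudot y, hy1]
      have hd1 : d ≤ dV := hmin dV u' M' v' hrep'
      have hd2 : dV ≤ d := by
        have := V.finrank_le
        rwa [Module.finrank_fin_fun] at this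
      apply Submodule.eq_top_of_finrank_eq
      rw [Module.finrank_fin_fun]
      omega
    -- the observability space U
    set U : Submodule ℝ (Fin d → ℝ) :=
      Submodule.span ℝ (Set.range fun p : ℕ × ℕ => (W p.1 * (M 0) ^ p.2)ᵀ *ᵥ u) with hUdef
    have huU : u ∈ U := Submodule.subset_span ⟨(0, 0), by simp [hW0]⟩
    have hUinv : ∀ i, i < q → ∀ x ∈ U, (M i)ᵀ *ᵥ x ∈ U := by
      intro i hi x hx
      refine Submodule.span_induction (fun y hy => ?_) ?_ ?_ ?_ hx
      · rcases hy with ⟨⟨b, j⟩, rfl⟩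
        have hcomb : (M i)ᵀ *ᵥ ((W b * (M 0) ^ j)ᵀ *ᵥ u) =
            (W b * (M 0) ^ j * M i)ᵀ *ᵥ u := by
          rw [Matrix.mulVec_mulVec, ← Matrix.transpose_mul]
        rw [hcomb]
        rcases Nat.eq_zero_or_pos i with rfl | hipos
        · apply Submodule.subset_span
          refine ⟨(b, j + 1), ?_⟩
          show (W b * M 0 ^ (j + 1))ᵀ *ᵥ u = (W b * M 0 ^ j * M 0)ᵀ *ᵥ u
          rw [pow_succ, ← mul_assoc]
        · apply Submodule.subset_span
          refine ⟨(q ^ ((Nat.digits q b).length + j) * i + b, 0), ?_⟩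
          show (W (q ^ ((Nat.digits q b).length + j) * i + b) * M 0 ^ 0)ᵀ *ᵥ u =
            (W b * M 0 ^ j * M i)ᵀ *ᵥ u
          rw [pow_zero, mul_one, hWkey i b ((Nat.digits q b).length + j) hipos (by omega)]
          rw [Nat.add_sub_cancel_left, hWi i hipos hi]
      · rw [Matrix.mulVec_zero]; exact U.zero_mem
      · intro x y _ _ hx' hy'
        rw [Matrix.mulVec_add]; exact U.add_mem hx' hy'
      · intro c x _ hx'
        rw [Matrix.mulVec_smul]; exact U.smul_mem c hx'
    have hUtop : U = ⊤ := by
      set dU := Module.finrank ℝ U with hdUdef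
      let bU : Module.Basis (Fin dU) ℝ U := Module.finBasis ℝ U
      let ψ : ℕ → (U →ₗ[ℝ] U) := fun i =>
        if h : i < q then ((M i)ᵀ.mulVecLin).restrict (fun x hx => hUinv i h x hx) else 0
      have hψ : ∀ i, i < q → ∀ x : U, ((ψ i x : Fin d → ℝ)) = (M i)ᵀ *ᵥ (x : Fin d → ℝ) := by
        intro i hi x
        simp [ψ, dif_pos hi, LinearMap.restrict_apply, ← Matrix.mulVec_transpose]
      let M'' : ℕ → Matrix (Fin dU) (Fin dU) ℝ := fun i => (LinearMap.toMatrix bU bU (ψ i))ᵀ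
      let u'' : Fin dU → ℝ := ⇑(bU.repr ⟨u, huU⟩)
      let v'' : Fin dU → ℝ := fun j => ((bU j : Fin d → ℝ)) ⬝ᵥ v
      have hvdot : ∀ z : U, (z : Fin d → ℝ) ⬝ᵥ v = ⇑(bU.repr z) ⬝ᵥ v'' := by
        intro z
        let L : (Fin d → ℝ) →ₗ[ℝ] ℝ :=
          { toFun := fun x => x ⬝ᵥ v
            map_add' := fun a b => add_dotProduct a b v
            map_smul' := fun c a => by simp [smul_dotProduct] }
        have : (z : Fin d → ℝ) ⬝ᵥ v = L ((z : Fin d → ℝ)) := rfl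
        rw [this]
        conv_lhs => rw [← bU.sum_repr z]
        simp only [AddSubmonoidClass.coe_finset_sum, map_sum, SetLike.val_smul,
          _root_.map_smul, smul_eq_mul, L, LinearMap.coe_mk, AddHom.coe_mk,
          dotProduct, v'']
      have hlist : ∀ l : List ℕ, (∀ i ∈ l, i < q) → ∀ x : U,
          ⇑(bU.repr x) ⬝ᵥ ((l.map M'').prod *ᵥ v'') =
            (x : Fin d → ℝ) ⬝ᵥ ((l.map M).prod *ᵥ v) := by
        intro l
        induction l with
        | nil =>
          intro _ x
          simp only [List.map_nil, List.prod_nil, Matrix.one_mulVec]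
          exact (hvdot x).symm
        | cons i t ih =>
          intro hl x
          have hi : i < q := hl i List.mem_cons_self
          have iht := ih (fun j hj => hl j (List.mem_cons_of_mem _ hj))
          simp only [List.map_cons, List.prod_cons]
          rw [← Matrix.mulVec_mulVec]
          have step1 : ⇑(bU.repr x) ⬝ᵥ ((M'' i) *ᵥ ((t.map M'').prod *ᵥ v'')) =
              ((LinearMap.toMatrix bU bU (ψ i)) *ᵥ ⇑(bU.repr x)) ⬝ᵥ ((t.map M'').prod *ᵥ v'') := by
            rw [Matrix.dotProduct_mulVec, Matrix.vecMul_transpose]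
          rw [step1, LinearMap.toMatrix_mulVec_repr, iht (ψ i x), hψ i hi x,
            aux_transpose_dot, Matrix.mulVec_mulVec]
      have hrep'' : IsLinearRepresentation q dU f u'' M'' v'' := by
        intro n
        rw [hrep n]
        exact (hlist (Nat.digits q n) (fun i hi => Nat.digits_lt_base (by omega) hi)
          ⟨u, huU⟩).symm
      have hd1 : d ≤ dU := hmin dU u'' M'' v'' hrep''
      have hd2 : dU ≤ d := by
        have := U.finrank_le
        rwa [Module.finrank_fin_fun] at this
      apply Submodule.eq_top_of_finrank_eq
      rw [Module.finrank_fin_fun]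
      omega
    -- the bilinear identity on generators
    have hf0 : ∀ b : ℕ, f b = f 0 * f b := by
      intro b
      have := hqm 0 b (Nat.digits q b).length (Nat.lt_base_pow_length_digits (by omega))
      simpa using this
    have hgen : ∀ b j a : ℕ,
        ((W b * (M 0) ^ j)ᵀ *ᵥ u) ⬝ᵥ (((M 0) ^ r - vecMulVec v u) *ᵥ (W a *ᵥ v)) = 0 := by
      intro b j a
      rw [Matrix.sub_mulVec, dotProduct_sub, aux_vecMulVec_mulVec,
        aux_transpose_dot, aux_transpose_dot]
      have hterm2 : u ⬝ᵥ ((W b * (M 0) ^ j) *ᵥ ((u ⬝ᵥ (W a *ᵥ v)) • v)) = f a * f b := by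
        rw [Matrix.mulVec_smul, dotProduct_smul, smul_eq_mul, ← Matrix.mulVec_mulVec,
          hpow j, ← hrepW a, ← hrepW b]
      have hterm1 : u ⬝ᵥ ((W b * (M 0) ^ j) *ᵥ ((M 0) ^ r *ᵥ (W a *ᵥ v))) = f a * f b := by
        have hcollapse : (W b * (M 0) ^ j) *ᵥ ((M 0) ^ r *ᵥ (W a *ᵥ v)) =
            (W b * (M 0) ^ (j + r) * W a) *ᵥ v := by
          simp [Matrix.mulVec_mulVec, mul_assoc, pow_add]
        rw [hcollapse]
        rcases Nat.eq_zero_or_pos a with rfl | ha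
        · rw [hW0, mul_one, ← Matrix.mulVec_mulVec, hpow, ← hrepW b]
          exact hf0 b
        · set k := (Nat.digits q b).length + j with hk
          have hlen : (Nat.digits q b).length ≤ k + r := by omega
          have hW' : W (q ^ (k + r) * a + b) =
              W b * (M 0) ^ (j + r) * W a := by
            rw [hWkey a b (k + r) ha hlen,
              show (k + r) - (Nat.digits q b).length = j + r by omega]
          rw [← hW', ← hrepW _]
          exact hqm a b k (lt_of_lt_of_le (Nat.lt_base_pow_length_digits (by omega))
            (Nat.pow_le_pow_right (by omega) (by omega)))
      rw [hterm1, hterm2, sub_self]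
    -- extend to all vectors
    have hAzero : ∀ x y : Fin d → ℝ, x ⬝ᵥ (((M 0) ^ r - vecMulVec v u) *ᵥ y) = 0 := by
      have hx1 : ∀ a : ℕ, ∀ x ∈ U, x ⬝ᵥ (((M 0) ^ r - vecMulVec v u) *ᵥ (W a *ᵥ v)) = 0 := by
        intro a x hx
        refine Submodule.span_induction (fun y hy => ?_) ?_ ?_ ?_ hx
        · rcases hy with ⟨⟨b, j⟩, rfl⟩
          exact hgen b j a
        · rw [zero_dotProduct]
        · intro x y _ _ hx' hy'
          rw [add_dotProduct, hx', hy', add_zero]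
        · intro c x _ hx'
          rw [smul_dotProduct, hx', smul_zero]
      intro x y
      have hxU : x ∈ U := by rw [hUtop]; trivial
      have hyV : y ∈ V := by rw [hVtop]; trivial
      refine Submodule.span_induction (fun z hz => ?_) ?_ ?_ ?_ hyV
      · rcases hz with ⟨a, rfl⟩
        exact hx1 a x hxU
      · rw [Matrix.mulVec_zero, dotProduct_zero]
      · intro z w _ _ hz' hw'
        rw [Matrix.mulVec_add, dotProduct_add, hz', hw', add_zero]
      · intro c z _ hz'
        rw [Matrix.mulVec_smul, dotProduct_smul, hz', smul_zero]
    have hA : (M 0) ^ r - vecMulVec v u = 0 := by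
      ext i j
      have h := hAzero (Pi.single i 1) (Pi.single j 1)
      simpa [single_dotProduct, Matrix.mulVec_single] using h
    rw [← sub_eq_zero]
    exact hA
  · -- easy direction
    intro hM a b k hb
    have hv1 : (u ⬝ᵥ v) • v = v := by
      rw [← aux_vecMulVec_mulVec, ← hM, hpow r]
    rcases Nat.eq_zero_or_pos a with rfl | ha
    · simp only [mul_zero, zero_add]
      have h0 : f 0 = u ⬝ᵥ v := by
        have := hrepW 0; rwa [hW0, Matrix.one_mulVec] at this
      rw [h0, hrepW b]
      conv_lhs => rw [← hv1]
      rw [Matrix.mulVec_smul, dotProduct_smul, smul_eq_mul]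
    · have hlen : (Nat.digits q b).length ≤ k := aux_digits_len_le hq hb
      rw [hrepW _, hrepW a, hrepW b,
        hWkey a b (k + r) ha (by omega)]
      have hexp : (k + r) - (Nat.digits q b).length = (k - (Nat.digits q b).length) + r := by
        omega
      rw [hexp, pow_add, hM]
      have : (W b * (M 0 ^ (k - (Nat.digits q b).length) * vecMulVec v u) * W a) *ᵥ v =
          W b *ᵥ (M 0 ^ (k - (Nat.digits q b).length) *ᵥ (vecMulVec v u *ᵥ (W a *ᵥ v))) := by
        simp [Matrix.mulVec_mulVec, mul_assoc]
      rw [this, aux_vecMulVec_mulVec, Matrix.mulVec_smul, hpow, Matrix.mulVec_smul,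
        dotProduct_smul, smul_eq_mul]
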